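/- Let (A, ∗, ⋎₀) be an NS-commutative algebra over a field of characteristic 0. Suppose given families of bilinear maps ≺ᵢ, ≻ᵢ, ⋎ᵢ : A × A → A for i ≥ 0 with x ≻₀ y = x ∗ y, x ≺₀ y = y ∗ x and ⋎₀ the given operation, such that for every n ≥ 0 and all x, y, z ∈ A (writing x ⊙ⱼ y = x ≺ⱼ y + x ≻ⱼ y + x ⋎ⱼ y): Σ_{i+j=n} (x ≺ᵢ y) ≺ⱼ z = Σ_{i+j=n} x ≺ᵢ (y ⊙ⱼ z); Σ_{i+j=n} (x ≻ᵢ y) ≺ⱼ z = Σ_{i+j=n} x ≻ᵢ (y ≺ⱼ z); Σ_{i+j=n} x ≻ᵢ (y ≻ⱼ z) = Σ_{i+j=n} (x ⊙ᵢ y) ≻ⱼ z; and Σ_{i+j=n} [(x ⋎ᵢ y) ≺ⱼ z + (x ⊙ᵢ y) ⋎ⱼ z] = Σ_{i+j=n} [x ≻ᵢ (y ⋎ⱼ z) + x ⋎ᵢ (y ⊙ⱼ z)] (i.e. the induced k[[t]]-bilinear operations make A[[t]] an NS-algebra deformation of (A, ∗, ⋎₀)). Define x ⋄ y = x ≻₁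 y − y ≺₁ x and x ▪ y = x ⋎₁ y − y ⋎₁ x. Then (A, ∗, ⋎₀, ⋄, ▪) is an NS-Poisson algebra. -/

import Mathlib

variable (K : Type*) [Field K] [CharZero K]
variable {A V : Type*} [AddCommGroup A] [Module K A] [AddCommGroup V] [Module K V]

/-- A Poisson algebra structure on `A`: a commutative associative product `m` and a
Lie bracket `br` satisfying the Leibniz rule. -/
def IsPoisson (m br : A →ₗ[K] A →ₗ[K] A) : Prop :=
  (∀ x y, m x y = m y x) ∧
  (∀ x y z, m (m x y) z = m x (m y z)) ∧
  (∀ x y, br x y = - br y x) ∧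
  (∀ x y z, br x (br y z) + br y (br z x) + br z (br x y) = 0) ∧
  (∀ x y z, br x (m y z) = m (br x y) z + m y (br x z))

/-- An NS-commutative algebra structure on `A`. -/
def IsNSComm (s c : A →ₗ[K] A →ₗ[K] A) : Prop :=
  (∀ x y, c x y = c y x) ∧
  (∀ x y z, s x (s y z) = s (s x y + s y x + c x y) z) ∧
  (∀ x y z, s x (c y z) + c x (s y z + s z y + c y z)
      = s y (c x z) + c y (s x z + s z x + c x z))

/-- An NS-Lie algebra structure on `A`. -/
def IsNSLie (d b : A →ₗ[K] A →ₗ[K] A) : Prop :=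
  (∀ x y, b x y = - b y x) ∧
  (∀ x y z, d x (d y z) - d (d x y) z - d y (d x z) + d (d y x) z = d (b x y) z) ∧
  (∀ x y z,
    b x (d y z - d z y + b y z) + b y (d z x - d x z + b z x) + b z (d x y - d y x + b x y)
    + d x (b y z) + d y (b z x) + d z (b x y) = 0)

/-- An NS-Poisson algebra structure on `A`. -/
def IsNSPoisson (s c d b : A →ₗ[K] A →ₗ[K] A) : Prop :=
  IsNSComm K s c ∧ IsNSLie K d b ∧
  (∀ x y z, s (d x y - d y x + b x y) z = d x (s y z) - s y (d x z)) ∧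
  (∀ x y z, d (s x y + s y x + c x y) z = s x (d y z) + s y (d x z)) ∧
  (∀ x y z, b x (s y z + s z y + c y z) + d x (c y z)
      = c (d x y - d y x + b x y) z + s z (b x y)
        + c y (d x z - d z x + b x z) + s y (b x z))

/-- The semi-classical limit of an NS-algebra deformation of an
NS-commutative algebra `(A, ∗, ⋎₀)` is an NS-Poisson algebra, with
`x ⋄ y = x ≻₁ y − y ≺₁ x` and `x ▪ y = x ⋎₁ y − y ⋎₁ x`. -/
theorem NSPoisson_semiclassical (s c : A →ₗ[K] A →ₗ[K] A)
    (hA : IsNSComm K s c)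
    (pre suc cur : ℕ → A →ₗ[K] A →ₗ[K] A)
    (hpre0 : pre 0 = s.flip) (hsuc0 : suc 0 = s) (hcur0 : cur 0 = c)
    (h1 : ∀ (n : ℕ) (x y z : A),
      ∑ p ∈ Finset.HasAntidiagonal.antidiagonal n, pre p.2 (pre p.1 x y) z
        = ∑ p ∈ Finset.HasAntidiagonal.antidiagonal n,
            pre p.1 x (pre p.2 y z + suc p.2 y z + cur p.2 y z))
    (h2 : ∀ (n : ℕ) (x y z : A),
      ∑ p ∈ Finset.HasAntidiagonal.antidiagonal n, pre p.2 (suc p.1 x y) z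
        = ∑ p ∈ Finset.HasAntidiagonal.antidiagonal n, suc p.1 x (pre p.2 y z))
    (h3 : ∀ (n : ℕ) (x y z : A),
      ∑ p ∈ Finset.HasAntidiagonal.antidiagonal n, suc p.1 x (suc p.2 y z)
        = ∑ p ∈ Finset.HasAntidiagonal.antidiagonal n,
            suc p.2 (pre p.1 x y + suc p.1 x y + cur p.1 x y) z)
    (h4 : ∀ (n : ℕ) (x y z : A),
      ∑ p ∈ Finset.HasAntidiagonal.antidiagonal n,
          (pre p.2 (cur p.1 x y) z + cur p.2 (pre p.1 x y + suc p.1 x y + cur p.1 x y) z)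
        = ∑ p ∈ Finset.HasAntidiagonal.antidiagonal n,
            (suc p.1 x (cur p.2 y z) + cur p.1 x (pre p.2 y z + suc p.2 y z + cur p.2 y z))) :
    IsNSPoisson K s c (suc 1 - (pre 1).flip) (cur 1 - (cur 1).flip) := by
  obtain ⟨hc, hs1, hs2⟩ := hA
  refine ⟨⟨hc, hs1, hs2⟩, ⟨?_, ?_, ?_⟩, ?_, ?_, ?_⟩
  · -- skew-symmetry of b
    intro x y
    simp only [LinearMap.sub_apply, LinearMap.flip_apply]
    abel
  · -- NS-Lie identity 1
    intro x y z
    have A1 := h1 2 z x y; have A2 := h1 2 z y x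
    have B1 := h2 2 x z y; have B2 := h2 2 y z x
    have C1 := h3 2 x y z; have C2 := h3 2 y x z
    simp only [Finset.Nat.sum_antidiagonal_eq_sum_range_succ_mk, Finset.sum_range_succ,
      Finset.sum_range_zero, Nat.sub_zero, Nat.sub_self, Nat.reduceSub, zero_add,
      hpre0, hsuc0, hcur0, LinearMap.flip_apply, LinearMap.add_apply, LinearMap.sub_apply,
      map_add, map_sub, hc] at A1 A2 B1 B2 C1 C2 ⊢
    linear_combination (norm := abel1) -A1 + A2 + B1 - B2 + C1 - C2
  · -- NS-Lie identity 2
    intro x y z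
    have D1 := h4 2 x y z; have D2 := h4 2 x z y; have D3 := h4 2 y x z
    have D4 := h4 2 y z x; have D5 := h4 2 z x y; have D6 := h4 2 z y x
    simp only [Finset.Nat.sum_antidiagonal_eq_sum_range_succ_mk, Finset.sum_range_succ,
      Finset.sum_range_zero, Nat.sub_zero, Nat.sub_self, Nat.reduceSub, zero_add,
      hpre0, hsuc0, hcur0, LinearMap.flip_apply, LinearMap.add_apply, LinearMap.sub_apply,
      map_add, map_sub, hc] at D1 D2 D3 D4 D5 D6 ⊢
    linear_combination (norm := abel1) -D1 + D2 + D3 - D4 - D5 + D6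
  · -- NSP1
    intro x y z
    have A1 := h1 1 z x y; have A2 := h1 1 z y x; have B1 := h2 1 x z y
    simp only [Finset.Nat.sum_antidiagonal_eq_sum_range_succ_mk, Finset.sum_range_succ,
      Finset.sum_range_zero, Nat.sub_zero, Nat.sub_self, Nat.reduceSub, zero_add,
      hpre0, hsuc0, hcur0, LinearMap.flip_apply, LinearMap.add_apply, LinearMap.sub_apply,
      map_add, map_sub, hc] at A1 A2 B1 ⊢
    linear_combination (norm := abel1) -A1 + A2 + B1
  · -- NSP2
    intro x y z
    have A1 := h1 1 z x y; have B1 := h2 1 x z y; have C1 := h3 1 x y z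
    simp only [Finset.Nat.sum_antidiagonal_eq_sum_range_succ_mk, Finset.sum_range_succ,
      Finset.sum_range_zero, Nat.sub_zero, Nat.sub_self, Nat.reduceSub, zero_add,
      hpre0, hsuc0, hcur0, LinearMap.flip_apply, LinearMap.add_apply, LinearMap.sub_apply,
      map_add, map_sub, hc] at A1 B1 C1 ⊢
    linear_combination (norm := abel1) A1 - B1 - C1
  · -- NSP3
    intro x y z
    have D1 := h4 1 x y z; have D2 := h4 1 y x z; have D3 := h4 1 y z x
    simp only [Finset.Nat.sum_antidiagonal_eq_sum_range_succ_mk, Finset.sum_range_succ,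
      Finset.sum_range_zero, Nat.sub_zero, Nat.sub_self, Nat.reduceSub, zero_add,
      hpre0, hsuc0, hcur0, LinearMap.flip_apply, LinearMap.add_apply, LinearMap.sub_apply,
      map_add, map_sub, hc] at D1 D2 D3 ⊢
    linear_combination (norm := abel1) -D1 + D2 - D3
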